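/- Let n ≥ 1, α ∈ (0,2), and let ρ : ℝⁿ → ℝ be a nonnegative, bounded, integrable function with total mass M = ∫_{ℝⁿ} ρ(y) dy. Suppose ρ attains its global maximum at a point x⁺ (i.e. ρ(y) ≤ ρ(x⁺) for all y ∈ ℝⁿ). Then for every r > 0 one has ∫_{ℝⁿ} (ρ(x⁺) − ρ(x⁺ + z)) |z|^{−(n+α)} dz ≥ r^{−(n+α)} ( V_n r^n ρ(x⁺) − M ), where V_n denotes the Lebesgue volume of the unit ball in ℝⁿ and the integral on the left, having a nonnegative integrand, is interpreted as a value in [0, ∞]. -/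

import Mathlib

open MeasureTheory

/-- At a global maximum point of a nonnegative, bounded, integrable density,
the fractional dissipation integral is bounded below by
`r^{-(n+α)} (V_n r^n ρ(x⁺) − M)` for every `r > 0`. -/
theorem stmt0 (n : ℕ) (hn : 1 ≤ n) (α : ℝ) (hα0 : 0 < α) (hα2 : α < 2)
    (ρ : EuclideanSpace ℝ (Fin n) → ℝ)
    (hρ_nonneg : ∀ y, 0 ≤ ρ y)
    (hρ_bdd : ∃ B, ∀ y, ρ y ≤ B)
    (hρ_int : Integrable ρ)
    (xplus : EuclideanSpace ℝ (Fin n))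
    (hmax : ∀ y, ρ y ≤ ρ xplus)
    (r : ℝ) (hr : 0 < r) :
    ENNReal.ofReal (r ^ (-((n : ℝ) + α)) *
        ((volume (Metric.ball (0 : EuclideanSpace ℝ (Fin n)) 1)).toReal * r ^ (n : ℝ) * ρ xplus
          - ∫ y, ρ y)) ≤
      ∫⁻ z, ENNReal.ofReal ((ρ xplus - ρ (xplus + z)) * ‖z‖ ^ (-((n : ℝ) + α))) := by
  haveI : Nontrivial (EuclideanSpace ℝ (Fin n)) := by
    refine Module.nontrivial_of_finrank_pos (R := ℝ) ?_
    rw [finrank_euclideanSpace, Fintype.card_fin]; omega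
  set ν : ℝ := (n : ℝ) + α with hν
  have hνpos : 0 < ν := by positivity
  set c : ℝ := r ^ (-ν) with hc
  have hcpos : 0 < c := Real.rpow_pos_of_pos hr _
  set S := Metric.ball (0 : EuclideanSpace ℝ (Fin n)) r with hS
  set M : ℝ := ∫ y, ρ y with hM
  set V : ℝ := (volume (Metric.ball (0 : EuclideanSpace ℝ (Fin n)) 1)).toReal with hV
  have hρc : Integrable (fun z => ρ (xplus + z)) := hρ_int.comp_add_left xplus
  -- volume of the ball of radius r
  have hballfin : volume S ≠ ⊤ := (measure_ball_lt_top).ne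
  have hvolS : (volume S).toReal = r ^ n * V := by
    rw [hS, Measure.addHaar_ball volume (0 : EuclideanSpace ℝ (Fin n)) hr.le]
    rw [ENNReal.toReal_mul, ENNReal.toReal_ofReal (by positivity), finrank_euclideanSpace,
      Fintype.card_fin, hV]
  -- integrability of the difference on S
  have hg : IntegrableOn (fun z => ρ xplus - ρ (xplus + z)) S :=
    (integrableOn_const measure_ball_lt_top.ne).sub hρc.integrableOn
  have hgnn : ∀ z, 0 ≤ ρ xplus - ρ (xplus + z) := fun z => sub_nonneg.2 (hmax _)
  -- lower bound on the set integral
  have hIle : V * r ^ (n : ℝ) * ρ xplus - M ≤ ∫ z in S, (ρ xplus - ρ (xplus + z)) := by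
    rw [integral_sub (integrableOn_const measure_ball_lt_top.ne : IntegrableOn (fun _ => ρ xplus) S volume) (hρc.integrableOn : IntegrableOn (fun z => ρ (xplus + z)) S volume)]
    have h1 : ∫ _ in S, ρ xplus = (r ^ n * V) * ρ xplus := by
      rw [setIntegral_const, smul_eq_mul, Measure.real, hvolS]
    have h2 : ∫ z in S, ρ (xplus + z) ≤ M := by
      calc ∫ z in S, ρ (xplus + z) ≤ ∫ z, ρ (xplus + z) :=
            setIntegral_le_integral hρc (Filter.Eventually.of_forall fun z => hρ_nonneg _)
        _ = M := by rw [hM]; exact integral_add_left_eq_self ρ xplus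
      
    have hrn : r ^ (n : ℝ) = r ^ n := Real.rpow_natCast r n
    rw [h1]
    have : V * r ^ (n : ℝ) * ρ xplus = r ^ n * V * ρ xplus := by rw [hrn]; ring
    rw [this]
    linarith
  -- convert to lintegral
  have hlin : ENNReal.ofReal (∫ z in S, (ρ xplus - ρ (xplus + z))) =
      ∫⁻ z in S, ENNReal.ofReal (ρ xplus - ρ (xplus + z)) :=
    ofReal_integral_eq_lintegral_ofReal hg (Filter.Eventually.of_forall fun z => hgnn z)
  -- pointwise bound inside the ball
  have hptwise : ∀ z ∈ S, ENNReal.ofReal ((ρ xplus - ρ (xplus + z)) * c) ≤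
      ENNReal.ofReal ((ρ xplus - ρ (xplus + z)) * ‖z‖ ^ (-ν)) := by
    intro z hz
    apply ENNReal.ofReal_le_ofReal
    rcases eq_or_ne z 0 with rfl | hz0
    · simp
    · have hnz : 0 < ‖z‖ := norm_pos_iff.2 hz0
      have hzr : ‖z‖ ≤ r := by
        have := Metric.mem_ball.1 hz
        rw [dist_zero_right] at this
        exact this.le
      have : c ≤ ‖z‖ ^ (-ν) :=
        Real.rpow_le_rpow_of_nonpos hnz hzr (neg_nonpos.2 hνpos.le)
      exact mul_le_mul_of_nonneg_left this (hgnn z)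
  calc ENNReal.ofReal (c * (V * r ^ (n : ℝ) * ρ xplus - M))
      ≤ ENNReal.ofReal (c * ∫ z in S, (ρ xplus - ρ (xplus + z))) := by
        apply ENNReal.ofReal_le_ofReal
        exact mul_le_mul_of_nonneg_left hIle hcpos.le
    _ = ENNReal.ofReal c * ∫⁻ z in S, ENNReal.ofReal (ρ xplus - ρ (xplus + z)) := by
        rw [ENNReal.ofReal_mul hcpos.le, hlin]
    _ = ∫⁻ z in S, ENNReal.ofReal ((ρ xplus - ρ (xplus + z)) * c) := by
        rw [← lintegral_const_mul' _ _ ENNReal.ofReal_ne_top]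
        congr 1
        ext z
        rw [← ENNReal.ofReal_mul hcpos.le, mul_comm]
    _ ≤ ∫⁻ z in S, ENNReal.ofReal ((ρ xplus - ρ (xplus + z)) * ‖z‖ ^ (-ν)) := by
        apply setLIntegral_mono' measurableSet_ball hptwise
    _ ≤ ∫⁻ z, ENNReal.ofReal ((ρ xplus - ρ (xplus + z)) * ‖z‖ ^ (-ν)) :=
        setLIntegral_le_lintegral _ _
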